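/- Let n, m ∈ ℕ and let A : [0,1] → Mₙ(ℂ) and B : [0,1] → M_m(ℂ) be continuous. Define C : [0,1] → M_{nm}(ℂ) by C(t) = A(t) ⊗ I_m + I_n ⊗ B(t), where ⊗ denotes the Kronecker (tensor) product of matrices. Then hol(C) = hol(A) ⊗ hol(B), and hence Tr(hol(C)) = Tr(hol(A)) · Tr(hol(B)). (This is the degree-zero instance of Theorem 3.3: the Bismut–Chern form of a tensor product connection ∇⊗Id + Id⊗∇̄ is the product of the Bismut–Chern forms.) -/

import Mathlib

open Kronecker

attribute [local instance] Matrix.linftyOpNormedAddCommGroup Matrix.linftyOpNormedSpace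

/-- The Kronecker product as a continuous bilinear map (over `ℝ`). -/
noncomputable def kCLM (p q : ℕ) :
    Matrix (Fin p) (Fin p) ℂ →L[ℝ] Matrix (Fin q) (Fin q) ℂ →L[ℝ]
      Matrix (Fin p × Fin q) (Fin p × Fin q) ℂ :=
  LinearMap.toContinuousLinearMap
    ((LinearMap.toContinuousLinearMap :
        (Matrix (Fin q) (Fin q) ℂ →ₗ[ℝ] Matrix (Fin p × Fin q) (Fin p × Fin q) ℂ) ≃ₗ[ℝ]
          (Matrix (Fin q) (Fin q) ℂ →L[ℝ] Matrix (Fin p × Fin q) (Fin p × Fin q) ℂ)).toLinearMap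
      ∘ₗ (Matrix.kroneckerBilinear : _ →ₗ[ℝ] _))

@[simp] lemma kCLM_apply (p q : ℕ) (X : Matrix (Fin p) (Fin p) ℂ)
    (Y : Matrix (Fin q) (Fin q) ℂ) : kCLM p q X Y = X ⊗ₖ Y := rfl

lemma HasDerivAt.kron {p q : ℕ} {f : ℝ → Matrix (Fin p) (Fin p) ℂ}
    {g : ℝ → Matrix (Fin q) (Fin q) ℂ} {f' : Matrix (Fin p) (Fin p) ℂ}
    {g' : Matrix (Fin q) (Fin q) ℂ} {t : ℝ}
    (hf : HasDerivAt f f' t) (hg : HasDerivAt g g' t) :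
    HasDerivAt (fun s => f s ⊗ₖ g s) (f' ⊗ₖ g t + f t ⊗ₖ g') t := by
  have h1 : HasDerivAt (fun s => kCLM p q (f s)) (kCLM p q f') t :=
    by
      letI : NormedAddCommGroup (Matrix (Fin q) (Fin q) ℂ →L[ℝ] Matrix (Fin p × Fin q) (Fin p × Fin q) ℂ) :=
        ContinuousLinearMap.toNormedAddCommGroup
      letI : NormedSpace ℝ (Matrix (Fin q) (Fin q) ℂ →L[ℝ] Matrix (Fin p × Fin q) (Fin p × Fin q) ℂ) :=
        ContinuousLinearMap.toNormedSpace
      exact (kCLM p q).hasFDerivAt.comp_hasDerivAt t hf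
  exact h1.clm_apply hg

theorem holonomy_kronecker_sum (n m : ℕ)
    (A : ℝ → Matrix (Fin n) (Fin n) ℂ) (B : ℝ → Matrix (Fin m) (Fin m) ℂ)
    (hA : ContinuousOn A (Set.Icc 0 1)) (hB : ContinuousOn B (Set.Icc 0 1))
    (YA : ℝ → Matrix (Fin n) (Fin n) ℂ) (YB : ℝ → Matrix (Fin m) (Fin m) ℂ)
    (YC : ℝ → Matrix (Fin n × Fin m) (Fin n × Fin m) ℂ)
    (hYA : ∀ t ∈ Set.Icc (0:ℝ) 1, HasDerivAt YA (YA t * A t) t) (hYA0 : YA 0 = 1)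
    (hYB : ∀ t ∈ Set.Icc (0:ℝ) 1, HasDerivAt YB (YB t * B t) t) (hYB0 : YB 0 = 1)
    (hYC : ∀ t ∈ Set.Icc (0:ℝ) 1,
      HasDerivAt YC
        (YC t * (A t ⊗ₖ (1 : Matrix (Fin m) (Fin m) ℂ) +
          (1 : Matrix (Fin n) (Fin n) ℂ) ⊗ₖ B t)) t)
    (hYC0 : YC 0 = 1) :
    YC 1 = YA 1 ⊗ₖ YB 1 ∧ (YC 1).trace = (YA 1).trace * (YB 1).trace := by
  set C : ℝ → Matrix (Fin n × Fin m) (Fin n × Fin m) ℂ :=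
    fun t => A t ⊗ₖ (1 : Matrix (Fin m) (Fin m) ℂ) +
      (1 : Matrix (Fin n) (Fin n) ℂ) ⊗ₖ B t with hCdef
  have hC : ContinuousOn C (Set.Icc 0 1) := by
    apply ContinuousOn.add
    · exact (((kCLM n m).continuous.comp_continuousOn hA).clm_apply continuousOn_const)
    · exact ((continuousOn_const (c := kCLM n m 1)).clm_apply hB)
  -- bound on the compact interval
  obtain ⟨K, hK⟩ := (isCompact_Icc (a := (0:ℝ)) (b := 1)).exists_bound_of_continuousOn hC
  set K' : NNReal := ⟨max K 0, le_max_right _ _⟩ with hK'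
  have hKK : ∀ t ∈ Set.Icc (0:ℝ) 1, ‖C t‖ ≤ (K' : ℝ) := fun t ht =>
    (hK t ht).trans (le_max_left _ _)
  set C' : ℝ → Matrix (Fin n × Fin m) (Fin n × Fin m) ℂ :=
    fun t => C (Set.projIcc 0 1 zero_le_one t) with hC'def
  have hC'mem : ∀ t ∈ Set.Icc (0:ℝ) 1, C' t = C t := fun t ht => by
    simp [hC'def, Set.projIcc_of_mem zero_le_one ht]
  set v : ℝ → Matrix (Fin n × Fin m) (Fin n × Fin m) ℂ →
      Matrix (Fin n × Fin m) (Fin n × Fin m) ℂ := fun t Y => Y * C' t with hvdef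
  have hlip : ∀ t, LipschitzOnWith K' (v t)
      (Set.univ : Set (Matrix (Fin n × Fin m) (Fin n × Fin m) ℂ)) := by
    intro t
    apply LipschitzWith.lipschitzOnWith
    apply LipschitzWith.of_dist_le_mul
    intro Y Z
    have h1 : ‖C' t‖ ≤ (K' : ℝ) := hKK _ (Set.projIcc 0 1 zero_le_one t).2
    calc dist (v t Y) (v t Z) = ‖(Y - Z) * C' t‖ := by
          rw [dist_eq_norm, hvdef]; ring_nf; rw [sub_mul]
      _ ≤ ‖Y - Z‖ * ‖C' t‖ := Matrix.linfty_opNorm_mul _ _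
      _ ≤ ‖C' t‖ * ‖Y - Z‖ := by rw [mul_comm]
      _ ≤ (K' : ℝ) * dist Y Z := by
          rw [dist_eq_norm]
          exact mul_le_mul_of_nonneg_right h1 (norm_nonneg _)
  set g : ℝ → Matrix (Fin n × Fin m) (Fin n × Fin m) ℂ := fun t => YA t ⊗ₖ YB t with hgdef
  have hg' : ∀ t ∈ Set.Icc (0:ℝ) 1, HasDerivAt g (g t * C t) t := by
    intro t ht
    have := (hYA t ht).kron (hYB t ht)
    convert this using 1
    rw [hgdef, hCdef]
    simp only [mul_add, ← Matrix.mul_kronecker_mul, Matrix.mul_one, Matrix.one_mul]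
  have key : Set.EqOn YC g (Set.Icc 0 1) := by
    apply ODE_solution_unique_of_mem_Icc_right (fun t _ => hlip t)
    · exact fun t ht => ((hYC t ht).continuousAt).continuousWithinAt
    · intro t ht
      have h := hYC t (Set.Ico_subset_Icc_self ht)
      have : v t (YC t) = YC t * C t := by
        rw [hvdef]; simp only []; rw [hC'mem t (Set.Ico_subset_Icc_self ht)]
      rw [this]
      exact h.hasDerivWithinAt
    · exact fun t _ => Set.mem_univ _
    · exact fun t ht => ((hg' t ht).continuousAt).continuousWithinAt
    · intro t ht
      have h := hg' t (Set.Ico_subset_Icc_self ht)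
      have : v t (g t) = g t * C t := by
        rw [hvdef]; simp only []; rw [hC'mem t (Set.Ico_subset_Icc_self ht)]
      rw [this]
      exact h.hasDerivWithinAt
    · exact fun t _ => Set.mem_univ _
    · rw [hYC0, hgdef]; simp [hYA0, hYB0, Matrix.one_kronecker_one]
  have h1 : YC 1 = YA 1 ⊗ₖ YB 1 := key (Set.mem_Icc.mpr ⟨zero_le_one, le_refl 1⟩)
  exact ⟨h1, by rw [h1, Matrix.trace_kronecker]⟩
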